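/- (Double-Rayleigh plus LOS MGF) Let γ̄ > 0, 0 < α < 1 and s < 0. Then ∫₀^∞ (1/(1 - s γ̄ α x)) e^{ s (1-α) γ̄ / (1 - s γ̄ α x) } e^{-x} dx = -( e^{-1/(s γ̄ α)} / (s γ̄ α) ) Γ(0, -1/(s α γ̄), (1-α)/α). -/

import Mathlib

open MeasureTheory Real

/-- Generalized incomplete gamma function `Γ(a, x, b) = ∫ₓ^∞ t^{a-1} e^{-t} e^{-b/t} dt`. -/
noncomputable def genGamma (a x b : ℝ) : ℝ :=
  ∫ t in Set.Ioi x, t ^ (a - 1) * Real.exp (-t) * Real.exp (-b / t)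

/-- **Double-Rayleigh plus LOS (DRLOS) MGF.** For `γ̄ > 0`, `0 < α < 1` and `s < 0`,
`∫₀^∞ (1/(1 - sγ̄αx)) e^{s(1-α)γ̄/(1 - sγ̄αx)} e^{-x} dx
  = -( e^{-1/(sγ̄α)} / (sγ̄α) ) Γ(0, -1/(sαγ̄), (1-α)/α)`. -/
theorem drlos_mgf (γbar α s : ℝ) (hγbar : 0 < γbar) (hα0 : 0 < α) (hα1 : α < 1)
    (hs : s < 0) :
    ∫ x in Set.Ioi (0 : ℝ),
        (1 / (1 - s * γbar * α * x)) *
          Real.exp (s * (1 - α) * γbar / (1 - s * γbar * α * x)) * Real.exp (-x)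
      = -(Real.exp (-1 / (s * γbar * α)) / (s * γbar * α)) *
          genGamma 0 (-1 / (s * α * γbar)) ((1 - α) / α) := by
  have hneg : s * γbar * α < 0 := by
    have := mul_pos hγbar hα0
    nlinarith
  have hnz : s * γbar * α ≠ 0 := ne_of_lt hneg
  set c : ℝ := -(s * γbar * α) with hc
  have hc0 : 0 < c := by rw [hc]; linarith
  have hcne : c ≠ 0 := ne_of_gt hc0
  have hαne : α ≠ 0 := ne_of_gt hα0
  set b : ℝ := (1 - α) / α with hb
  have key : genGamma 0 (-1 / (s * α * γbar)) b
      = ∫ x in Set.Ioi (0 : ℝ),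
          ((x + 1 / c) ^ ((0 : ℝ) - 1) * Real.exp (-(x + 1 / c)) *
            Real.exp (-b / (x + 1 / c))) := by
    have ha : -1 / (s * α * γbar) = 1 / c := by
      rw [hc]; rw [show s * α * γbar = s * γbar * α by ring, neg_div, one_div_neg_eq_neg_one_div]
    rw [genGamma, ha,
      ← (measurePreserving_add_right volume (1 / c)).setIntegral_preimage_emb
        (measurableEmbedding_addRight _)]
    rw [Set.preimage_add_const_Ioi, sub_self]
  rw [key, ← MeasureTheory.integral_const_mul]
  apply setIntegral_congr_fun measurableSet_Ioi
  intro x hx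
  have hx0 : 0 < x := hx
  have hxd : 0 < x + 1 / c := by positivity
  have hxdne : x + 1 / c ≠ 0 := ne_of_gt hxd
  have h4 : s * γbar * α = -c := by rw [hc]; ring
  have hB : 1 - s * γbar * α * x = c * (x + 1 / c) := by
    have h5 : c * (1 / c) = 1 := by field_simp
    rw [mul_add, h5, h4]; ring
  have h2 : s * (1 - α) * γbar = -b * c := by
    rw [hb, hc]; field_simp
  have hA : s * (1 - α) * γbar / (1 - s * γbar * α * x) = -b / (x + 1 / c) := by
    rw [hB, h2, show -b * c = c * -b by ring, mul_div_mul_left _ _ hcne]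
  have hC : -(Real.exp (-1 / (s * γbar * α)) / (s * γbar * α)) = Real.exp (1 / c) / c := by
    rw [h4, show (-1 : ℝ) / -c = 1 / c from neg_div_neg_eq 1 c]; ring
  have hr : (x + 1 / c) ^ ((0 : ℝ) - 1) = (x + 1 / c)⁻¹ := by
    rw [zero_sub, Real.rpow_neg_one]
  have hD : Real.exp (-(x + 1 / c)) = Real.exp (-x) * Real.exp (-(1 / c)) := by
    rw [← Real.exp_add]; ring_nf
  dsimp only
  rw [hC, hA, hB, hr, hD, Real.exp_neg (1 / c)]
  have hec : Real.exp (1 / c) ≠ 0 := Real.exp_ne_zero _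
  field_simp
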